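/- arXiv:0911.2263 — 4 statements merged into one kernel-verified Lean document; each statement's English description precedes it below -/
import Mathlib

section
/- Let a, δ, r > 0 satisfy r² + (1+a)²δ² ≤ 4, and let ρ : ℂ → ℝ satisfy ρ(z) < δ − (aδ/r)·Re z for all |z| ≤ r. Set Ω = {(z,w) ∈ ℂ² : Re w + ρ(z) < 0} ∩ B(0,2). Then the holomorphic map φ(ζ) = (rζ, −δ + aδζ) maps the open unit disc 𝔻 into Ω, with φ(0) = (0, −δ) and φ'(0) = (r, aδ); consequently, with X = (r/(aδ), 1), the Kobayashi metric of Ω satisfies F_K((0,−δ), X) ≤ 1/(aδ). -/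
open Metric Set

/-- The Kobayashi metric of a domain `Ω` at a point `Q` in direction `X`. -/
noncomputable def kobayashiMetric {E : Type*} [NormedAddCommGroup E] [NormedSpace ℂ E]
    (Ω : Set E) (Q X : E) : ℝ :=
  sInf {α : ℝ | 0 < α ∧ ∃ φ : ℂ → E, DifferentiableOn ℂ φ (ball (0:ℂ) 1) ∧
    MapsTo φ (ball (0:ℂ) 1) Ω ∧ φ 0 = Q ∧ deriv φ 0 = α⁻¹ • X}

/-- Let `a, δ, r > 0` with `r² + (1+a)²δ² ≤ 4`, and let `ρ : ℂ → ℝ` satisfy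
`ρ(z) < δ - (aδ/r)·Re z` for `|z| ≤ r`.  With
`Ω = {(z,w) : Re w + ρ(z) < 0} ∩ B(0,2) ⊂ ℂ²`, the map
`φ(ζ) = (rζ, -δ + aδζ)` is a holomorphic map of the unit disc into `Ω` with
`φ(0) = (0,-δ)` and `φ'(0) = (r, aδ)`; consequently, with `X = (r/(aδ), 1)`,
`F_K((0,-δ), X) ≤ 1/(aδ)`. -/
theorem kobayashi_disc_bound_C2 (a δ r : ℝ) (ha : 0 < a) (hδ : 0 < δ) (hr : 0 < r)
    (hball : r ^ 2 + (1 + a) ^ 2 * δ ^ 2 ≤ 4)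
    (ρ : ℂ → ℝ) (hρ : ∀ z : ℂ, ‖z‖ ≤ r → ρ z < δ - (a * δ / r) * z.re)
    (Ω : Set (EuclideanSpace ℂ (Fin 2)))
    (hΩ : Ω = {p : EuclideanSpace ℂ (Fin 2) | (p 1).re + ρ (p 0) < 0} ∩
      ball (0 : EuclideanSpace ℂ (Fin 2)) 2)
    (φ : ℂ → EuclideanSpace ℂ (Fin 2))
    (hφ : φ = fun ζ : ℂ => (WithLp.equiv 2 (Fin 2 → ℂ)).symm
      ![(r : ℂ) * ζ, -(δ : ℂ) + (a : ℂ) * (δ : ℂ) * ζ]) :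
    DifferentiableOn ℂ φ (ball (0:ℂ) 1) ∧
    MapsTo φ (ball (0:ℂ) 1) Ω ∧
    φ 0 = (WithLp.equiv 2 (Fin 2 → ℂ)).symm ![0, -(δ : ℂ)] ∧
    deriv φ 0 = (WithLp.equiv 2 (Fin 2 → ℂ)).symm ![(r : ℂ), (a : ℂ) * (δ : ℂ)] ∧
    kobayashiMetric Ω ((WithLp.equiv 2 (Fin 2 → ℂ)).symm ![0, -(δ : ℂ)])
      ((WithLp.equiv 2 (Fin 2 → ℂ)).symm ![((r / (a * δ) : ℝ) : ℂ), 1]) ≤ 1 / (a * δ) := by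
  have haδ : 0 < a * δ := mul_pos ha hδ
  -- derivative
  have hder : HasDerivAt φ ((WithLp.equiv 2 (Fin 2 → ℂ)).symm ![(r : ℂ), (a : ℂ) * (δ : ℂ)]) 0 := by
    rw [hφ]
    have hg : HasDerivAt (fun ζ : ℂ => ![(r : ℂ) * ζ, -(δ : ℂ) + (a : ℂ) * (δ : ℂ) * ζ])
        (![(r : ℂ), (a : ℂ) * (δ : ℂ)]) 0 := by
      apply hasDerivAt_pi.2
      intro i
      fin_cases i
      · simpa using (hasDerivAt_id (0:ℂ)).const_mul (r:ℂ)
      · simpa using ((hasDerivAt_id (0:ℂ)).const_mul ((a:ℂ)*δ)).const_add (-(δ:ℂ))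
    exact ((PiLp.continuousLinearEquiv 2 ℂ (fun _ : Fin 2 => ℂ)).symm.toContinuousLinearMap.hasFDerivAt.comp_hasDerivAt 0 hg)
  have hdiff : Differentiable ℂ φ := by
    rw [hφ]
    have hg : Differentiable ℂ (fun ζ : ℂ => ![(r : ℂ) * ζ, -(δ : ℂ) + (a : ℂ) * (δ : ℂ) * ζ]) := by
      apply differentiable_pi.2
      intro i
      fin_cases i
      · simpa using (differentiable_id.const_mul (r:ℂ))
      · simpa using ((differentiable_id.const_mul ((a:ℂ)*δ)).const_add (-(δ:ℂ)))
    exact ((PiLp.continuousLinearEquiv 2 ℂ (fun _ : Fin 2 => ℂ)).symm.toContinuousLinearMap.differentiable.comp hg)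
  -- maps to
  have hmaps : MapsTo φ (ball (0:ℂ) 1) Ω := by
    intro ζ hζ
    rw [mem_ball, dist_zero_right] at hζ
    rw [hΩ]
    constructor
    · show ((φ ζ) 1).re + ρ ((φ ζ) 0) < 0
      have h0 : (φ ζ) 0 = (r : ℂ) * ζ := by rw [hφ]; rfl
      have h1 : (φ ζ) 1 = -(δ : ℂ) + (a : ℂ) * (δ : ℂ) * ζ := by rw [hφ]; rfl
      rw [h0, h1]
      have habs : ‖(r:ℂ) * ζ‖ ≤ r := by
        have hζa : ‖ζ‖ < 1 := hζ
        rw [norm_mul, Complex.norm_real, Real.norm_of_nonneg hr.le]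
        nlinarith [norm_nonneg ζ, hζa.le]
      have := hρ ((r:ℂ)*ζ) habs
      have hre : ((r:ℂ) * ζ).re = r * ζ.re := by simp
      have hre2 : (-(δ : ℂ) + (a : ℂ) * (δ : ℂ) * ζ).re = -δ + a * δ * ζ.re := by simp
      rw [hre] at this
      rw [hre2]
      have : ρ ((r:ℂ)*ζ) < δ - a * δ * ζ.re := by
        have hrr : a * δ / r * (r * ζ.re) = a * δ * ζ.re := by field_simp
        linarith [hrr ▸ this]
      linarith
    · rw [mem_ball, dist_zero_right]
      have hnorm : ‖φ ζ‖ = Real.sqrt (‖(r:ℂ) * ζ‖ ^ 2 + ‖-(δ : ℂ) + (a : ℂ) * (δ : ℂ) * ζ‖ ^ 2) := by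
        rw [hφ]
        rw [EuclideanSpace.norm_eq]
        congr 1
        rw [Fin.sum_univ_two]
        rfl
      rw [hnorm]
      rw [show (2:ℝ) = Real.sqrt 4 by rw [show (4:ℝ) = 2^2 by norm_num, Real.sqrt_sq]; norm_num]
      apply Real.sqrt_lt_sqrt (by positivity)
      have h1 : ‖(r:ℂ) * ζ‖ ^ 2 < r ^ 2 := by
        rw [norm_mul, Complex.norm_real, Real.norm_of_nonneg hr.le]
        have hz2 : ‖ζ‖ ^ 2 < 1 := by nlinarith [norm_nonneg ζ]
        nlinarith [pow_pos hr 2]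
      have h2 : ‖-(δ : ℂ) + (a : ℂ) * (δ : ℂ) * ζ‖ ^ 2 < (1 + a) ^ 2 * δ ^ 2 := by
        have hb : ‖-(δ : ℂ) + (a : ℂ) * (δ : ℂ) * ζ‖ < (1 + a) * δ := by
          calc ‖-(δ : ℂ) + (a : ℂ) * (δ : ℂ) * ζ‖ ≤ ‖-(δ:ℂ)‖ + ‖(a:ℂ) * (δ:ℂ) * ζ‖ := norm_add_le _ _
          _ = δ + a * δ * ‖ζ‖ := by
              rw [norm_neg, Complex.norm_real, Real.norm_of_nonneg hδ.le, norm_mul, norm_mul,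
                Complex.norm_real, Complex.norm_real, Real.norm_of_nonneg ha.le,
                Real.norm_of_nonneg hδ.le]
          _ < δ + a * δ * 1 := by nlinarith
          _ = (1 + a) * δ := by ring
        nlinarith [norm_nonneg (-(δ : ℂ) + (a : ℂ) * (δ : ℂ) * ζ)]
      linarith
  have hφ0 : φ 0 = (WithLp.equiv 2 (Fin 2 → ℂ)).symm ![0, -(δ : ℂ)] := by
    rw [hφ]
    simp
  refine ⟨hdiff.differentiableOn, hmaps, hφ0, hder.deriv, ?_⟩
  -- Kobayashi bound
  apply csInf_le
  · exact ⟨0, fun x hx => hx.1.le⟩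
  · refine ⟨by positivity, φ, hdiff.differentiableOn, hmaps, hφ0, ?_⟩
    rw [hder.deriv]
    ext i
    fin_cases i
    · show (r:ℂ) = ((1 / (a * δ) : ℝ))⁻¹ • (((r / (a * δ) : ℝ)) : ℂ)
      rw [one_div, inv_inv]
      push_cast
      rw [Complex.real_smul]
      push_cast
      have hne : ((a:ℂ) * (δ:ℂ)) ≠ 0 :=
        mul_ne_zero (Complex.ofReal_ne_zero.2 ha.ne') (Complex.ofReal_ne_zero.2 hδ.ne')
      field_simp
      rw [mul_assoc, mul_div_cancel_right₀ _ hne]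
    · show (a:ℂ) * δ = ((1 / (a * δ) : ℝ))⁻¹ • (1:ℂ)
      rw [one_div, inv_inv, Complex.real_smul]
      push_cast
      ring
end

section
/- Let a, δ, r > 0 satisfy r⁶ + r⁴ + (1+a)²δ² ≤ 4, and let ρ̃ : ℂ² → ℝ satisfy ρ̃(ζ³, ζ²) < δ − (aδ/r)·Re ζ for all ζ ∈ ℂ with |ζ| ≤ r. Set Ω = {(s,t,w) ∈ ℂ³ : Re w + ρ̃(s,t) < 0} ∩ B(0,2). Then the holomorphic map φ(ζ) = (r³ζ³, r²ζ², −δ + aδζ) maps the open unit disc 𝔻 into Ω, with φ(0) = (0,0,−δ) and φ'(0) = (0, 0, aδ); consequently the Kobayashi metric of Ω satisfies F_K((0,0,−δ), ν) ≤ 1/(aδ), where ν = (0,0,1). -/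
set_option maxHeartbeats 1000000

open Metric Set

/-- Let `a, δ, r > 0` with `r⁶ + r⁴ + (1+a)²δ² ≤ 4`, and let `ρ̃ : ℂ² → ℝ` satisfy
`ρ̃(ζ³, ζ²) < δ - (aδ/r)·Re ζ` for `|ζ| ≤ r`.  With
`Ω = {(s,t,w) : Re w + ρ̃(s,t) < 0} ∩ B(0,2) ⊂ ℂ³`, the map
`φ(ζ) = (r³ζ³, r²ζ², -δ + aδζ)` is a holomorphic map of the unit disc into `Ω` with
`φ(0) = (0,0,-δ)` and `φ'(0) = (0,0,aδ)`; consequently `F_K((0,0,-δ), ν) ≤ 1/(aδ)`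
for `ν = (0,0,1)`. -/
theorem kobayashi_disc_bound_C3 (a δ r : ℝ) (ha : 0 < a) (hδ : 0 < δ) (hr : 0 < r)
    (hball : r ^ 6 + r ^ 4 + (1 + a) ^ 2 * δ ^ 2 ≤ 4)
    (ρ : ℂ × ℂ → ℝ)
    (hρ : ∀ ζ : ℂ, ‖ζ‖ ≤ r → ρ (ζ ^ 3, ζ ^ 2) < δ - (a * δ / r) * ζ.re)
    (Ω : Set (EuclideanSpace ℂ (Fin 3)))
    (hΩ : Ω = {p : EuclideanSpace ℂ (Fin 3) | (p 2).re + ρ (p 0, p 1) < 0} ∩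
      ball (0 : EuclideanSpace ℂ (Fin 3)) 2)
    (φ : ℂ → EuclideanSpace ℂ (Fin 3))
    (hφ : φ = fun ζ : ℂ => (WithLp.equiv 2 (Fin 3 → ℂ)).symm
      ![(r : ℂ) ^ 3 * ζ ^ 3, (r : ℂ) ^ 2 * ζ ^ 2, -(δ : ℂ) + (a : ℂ) * (δ : ℂ) * ζ]) :
    DifferentiableOn ℂ φ (ball (0:ℂ) 1) ∧
    MapsTo φ (ball (0:ℂ) 1) Ω ∧
    φ 0 = (WithLp.equiv 2 (Fin 3 → ℂ)).symm ![0, 0, -(δ : ℂ)] ∧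
    deriv φ 0 = (WithLp.equiv 2 (Fin 3 → ℂ)).symm ![0, 0, (a : ℂ) * (δ : ℂ)] ∧
    kobayashiMetric Ω ((WithLp.equiv 2 (Fin 3 → ℂ)).symm ![0, 0, -(δ : ℂ)])
      ((WithLp.equiv 2 (Fin 3 → ℂ)).symm ![0, 0, 1]) ≤ 1 / (a * δ) := by
  have e := (PiLp.continuousLinearEquiv 2 ℂ (fun _ : Fin 3 => ℂ)).symm
  set f : ℂ → (Fin 3 → ℂ) := fun ζ =>
    ![(r : ℂ) ^ 3 * ζ ^ 3, (r : ℂ) ^ 2 * ζ ^ 2, -(δ : ℂ) + (a : ℂ) * (δ : ℂ) * ζ] with hf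
  have hφe : φ = (PiLp.continuousLinearEquiv 2 ℂ (fun _ : Fin 3 => ℂ)).symm ∘ f := by
    rw [hφ]; rfl
  have hfd : Differentiable ℂ f := by
    rw [differentiable_pi]
    intro i
    fin_cases i <;> simp [hf] <;> fun_prop
  have hdiff : Differentiable ℂ φ := by
    rw [hφe]
    exact ((PiLp.continuousLinearEquiv 2 ℂ (fun _ : Fin 3 => ℂ)).symm.differentiable).comp hfd
  -- components of φ
  have hcomp : ∀ ζ : ℂ, (φ ζ 0 = (r : ℂ) ^ 3 * ζ ^ 3) ∧ (φ ζ 1 = (r : ℂ) ^ 2 * ζ ^ 2) ∧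
      (φ ζ 2 = -(δ : ℂ) + (a : ℂ) * (δ : ℂ) * ζ) := by
    intro ζ; rw [hφ]; refine ⟨rfl, rfl, rfl⟩
  -- MapsTo
  have hmaps : MapsTo φ (ball (0:ℂ) 1) Ω := by
    intro ζ hζ
    rw [mem_ball, dist_zero_right] at hζ
    obtain ⟨h0, h1, h2⟩ := hcomp ζ
    rw [hΩ]
    constructor
    · show (φ ζ 2).re + ρ (φ ζ 0, φ ζ 1) < 0
      have key := hρ (r * ζ) (by
        rw [norm_mul, Complex.norm_of_nonneg hr.le]
        nlinarith [norm_nonneg ζ])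
      have e0 : ((r : ℂ) * ζ) ^ 3 = φ ζ 0 := by rw [h0]; ring
      have e1 : ((r : ℂ) * ζ) ^ 2 = φ ζ 1 := by rw [h1]; ring
      rw [e0, e1] at key
      have hre : ((r : ℂ) * ζ).re = r * ζ.re := by
        simp [Complex.mul_re]
      rw [hre] at key
      have : a * δ / r * (r * ζ.re) = a * δ * ζ.re := by
        field_simp
      rw [this] at key
      have h2re : (φ ζ 2).re = -δ + a * δ * ζ.re := by
        rw [h2]; simp [Complex.add_re, Complex.mul_re]
      rw [h2re]
      linarith
    · rw [mem_ball, dist_zero_right, EuclideanSpace.norm_eq]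
      have habs : ‖ζ‖ ≤ 1 := le_of_lt hζ
      have hnn : 0 ≤ ‖ζ‖ := norm_nonneg ζ
      have hsum : ∑ i : Fin 3, ‖φ ζ i‖ ^ 2 < 4 := by
        rw [Fin.sum_univ_three, h0, h1, h2]
        have n0 : ‖(r : ℂ) ^ 3 * ζ ^ 3‖ = r ^ 3 * ‖ζ‖ ^ 3 := by
          simp [abs_of_pos hr]
        have n1 : ‖(r : ℂ) ^ 2 * ζ ^ 2‖ = r ^ 2 * ‖ζ‖ ^ 2 := by
          simp [abs_of_pos hr]
        have n2 : ‖-(δ : ℂ) + (a : ℂ) * (δ : ℂ) * ζ‖ < (1 + a) * δ := by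
          calc ‖-(δ : ℂ) + (a : ℂ) * (δ : ℂ) * ζ‖ ≤ ‖-(δ : ℂ)‖ + ‖(a : ℂ) * (δ : ℂ) * ζ‖ :=
                norm_add_le _ _
            _ = δ + a * δ * ‖ζ‖ := by
                simp [
                  abs_of_pos hδ, abs_of_pos ha]
            _ < (1 + a) * δ := by
                nlinarith [mul_pos (mul_pos ha hδ) (show (0:ℝ) < 1 - ‖ζ‖ by linarith)]
        have hn2nn : (0:ℝ) ≤ ‖-(δ : ℂ) + (a : ℂ) * (δ : ℂ) * ζ‖ := norm_nonneg _
        rw [n0, n1]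
        have A6 : ‖ζ‖ ^ 6 ≤ 1 := pow_le_one₀ hnn habs
        have A4 : ‖ζ‖ ^ 4 ≤ 1 := pow_le_one₀ hnn habs
        have B : ‖-(δ : ℂ) + (a : ℂ) * (δ : ℂ) * ζ‖ ^ 2 < ((1 + a) * δ) ^ 2 := by
          nlinarith [hn2nn, n2]
        nlinarith [A6, A4, B, pow_pos hr 6, pow_pos hr 4, hball]
      exact (Real.sqrt_lt' two_pos).mpr (by nlinarith [hsum])
  -- φ 0
  have hφ0 : φ 0 = (WithLp.equiv 2 (Fin 3 → ℂ)).symm ![0, 0, -(δ : ℂ)] := by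
    rw [hφ]
    beta_reduce
    congr 1
    funext i
    fin_cases i <;> simp
  -- deriv
  have hder : HasDerivAt φ ((WithLp.equiv 2 (Fin 3 → ℂ)).symm ![0, 0, (a : ℂ) * (δ : ℂ)]) 0 := by
    have hfd0 : HasDerivAt f ![0, 0, (a : ℂ) * (δ : ℂ)] 0 := by
      rw [hasDerivAt_pi]
      intro i
      fin_cases i
      · simpa [hf] using ((hasDerivAt_pow 3 (0:ℂ)).const_mul ((r:ℂ)^3))
      · simpa [hf] using ((hasDerivAt_pow 2 (0:ℂ)).const_mul ((r:ℂ)^2))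
      · simpa [hf] using ((hasDerivAt_id (0:ℂ)).const_mul ((a:ℂ)*(δ:ℂ))).const_add (-(δ:ℂ))
    rw [hφe]
    exact ((PiLp.continuousLinearEquiv 2 ℂ (fun _ : Fin 3 => ℂ)).symm.toContinuousLinearMap.hasFDerivAt).comp_hasDerivAt 0 hfd0
  have hderiv : deriv φ 0 = (WithLp.equiv 2 (Fin 3 → ℂ)).symm ![0, 0, (a : ℂ) * (δ : ℂ)] :=
    hder.deriv
  refine ⟨hdiff.differentiableOn, hmaps, hφ0, hderiv, ?_⟩
  -- Kobayashi bound
  have haδ : 0 < a * δ := mul_pos ha hδ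
  apply csInf_le
  · exact ⟨0, fun x hx => le_of_lt hx.1⟩
  · refine ⟨by positivity, φ, hdiff.differentiableOn, hmaps, hφ0, ?_⟩
    rw [hderiv]
    have : ((1 / (a * δ))⁻¹ : ℝ) = a * δ := by field_simp
    rw [this, WithLp.equiv_symm_apply, ← WithLp.toLp_smul]
    congr 1
    funext i
    fin_cases i <;> simp [Complex.real_smul]
end

section
/- Let a > 16 be large enough that b(a) exists, let 0 < s ≤ 1/4, and set r = s²/a. Assume 2r ≤ b(a). Then u_a(z) = 1/8 − Re z + (log|z|)/(4 log a) < 0 for all z with 0 < |z| < 2r, and consequently R_a(z) = 0 for all |z| < 2r. -/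
open Set

/-- `u_a(z) = 1/8 − Re z + (log |z|)/(4 log a)`. -/
noncomputable def uFun (a : ℝ) (z : ℂ) : ℝ :=
  1/8 - z.re + Real.log (‖z‖) / (4 * Real.log a)

/-- `S_a = {b ∈ (0,1] : 1/8 − b + (log b)/(4 log a) = 0}`. -/
def Sroot (a : ℝ) : Set ℝ :=
  {b : ℝ | b ∈ Ioc (0:ℝ) 1 ∧ 1/8 - b + Real.log b / (4 * Real.log a) = 0}

/-- `R_a(z) = max{u_a(z), 0}` if `Re z ≤ b(a)` (with `R_a(0) = 0`) and
`R_a(z) = u_a(z)` if `Re z > b(a)`. -/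
noncomputable def RFun (a b : ℝ) (z : ℂ) : ℝ :=
  if z = 0 then 0 else if z.re ≤ b then max (uFun a z) 0 else uFun a z

/-- Let `a > 16` be such that `b(a)` exists, let `0 < s ≤ 1/4` and `r = s²/a`, and
assume `2r ≤ b(a)`.  Then `u_a < 0` on `{0 < |z| < 2r}` and `R_a ≡ 0` on `{|z| < 2r}`. -/
theorem RFun_vanishes_near_zero (a b s r : ℝ) (ha : 16 < a) (hb : IsLeast (Sroot a) b)
    (hs : 0 < s) (hs' : s ≤ 1/4) (hr : r = s ^ 2 / a) (h2r : 2 * r ≤ b) :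
    (∀ z : ℂ, 0 < ‖z‖ → ‖z‖ < 2 * r → uFun a z < 0) ∧
    (∀ z : ℂ, ‖z‖ < 2 * r → RFun a b z = 0) := by
  have ha0 : (0:ℝ) < a := by linarith
  have hla : 0 < Real.log a := Real.log_pos (by linarith)
  have hmain : ∀ z : ℂ, 0 < ‖z‖ → ‖z‖ < 2 * r → uFun a z < 0 := by
    intro z hz0 hz2
    have hz8 : ‖z‖ < 1/(8*a) := by
      have hs2 : s^2 ≤ 1/16 := by nlinarith
      calc ‖z‖ < 2*r := hz2
        _ = 2*s^2/a := by rw [hr]; ring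
        _ ≤ 1/(8*a) := by
            rw [div_le_div_iff₀ ha0 (by positivity)]; nlinarith
    have hlog : Real.log (‖z‖) < -(Real.log 8 + Real.log a) := by
      have h := Real.log_lt_log hz0 hz8
      rwa [one_div, Real.log_inv, Real.log_mul (by norm_num) (ne_of_gt ha0)] at h
    have h8 : 0 < Real.log 8 := Real.log_pos (by norm_num)
    have hdiv : Real.log (‖z‖) / (4 * Real.log a) < -(1/4) := by
      rw [div_lt_iff₀ (by positivity)]
      nlinarith
    have hre : -z.re ≤ ‖z‖ := by
      have h1 := Complex.abs_re_le_norm z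
      have h2 : -z.re ≤ |z.re| := neg_le_abs z.re
      linarith
    have hzsmall : ‖z‖ < 1/8 := by
      have : 1/(8*a) ≤ 1/8 := by
        rw [div_le_div_iff₀ (by positivity) (by norm_num)]; nlinarith
      linarith
    unfold uFun
    linarith
  refine ⟨hmain, fun z hz => ?_⟩
  unfold RFun
  by_cases hz0 : z = 0
  · simp [hz0]
  · have hpos : 0 < ‖z‖ := norm_pos_iff.mpr hz0
    have hu : uFun a z < 0 := hmain z hpos hz
    have hre : z.re ≤ b := by
      have h1 := Complex.abs_re_le_norm z
      have h2 : z.re ≤ |z.re| := le_abs_self z.re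
      linarith
    rw [if_neg hz0, if_pos hre, max_eq_right (le_of_lt hu)]
end

section
/- Define q : ℂ² → ℝ by q(s,t) = e^{|s|² + |t|²} |s² − t³|². Then q is strictly plurisubharmonic off the variety V = {(s,t) : s² = t³}: for every (s,t) ∈ ℂ² with s² ≠ t³ and every nonzero L ∈ ℂ², the function λ ↦ q((s,t) + λL) of the complex variable λ has strictly positive Laplacian at λ = 0. -/
/-- The Laplacian at `0` of a function `g : ℂ → ℝ` of one complex variable:
`∂²g/∂x²(0) + ∂²g/∂y²(0)`. -/
noncomputable def laplacianAtZero (g : ℂ → ℝ) : ℝ :=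
  deriv (deriv (fun t : ℝ => g (t : ℂ))) 0 +
    deriv (deriv (fun t : ℝ => g ((t : ℂ) * Complex.I))) 0

private lemma hasDerivAt_lin (a b x : ℝ) :
    HasDerivAt (fun y : ℝ => a + b*y) b x := by
  exact ((hasDerivAt_const x a).add ((hasDerivAt_id x).const_mul b)).congr_deriv (by ring)

private lemma hasDerivAt_quad (a b c x : ℝ) :
    HasDerivAt (fun y : ℝ => a + b*y + c*y^2) (b + 2*c*x) x := by
  have h := ((hasDerivAt_const x a).add ((hasDerivAt_id x).const_mul b)).add
    ((hasDerivAt_pow 2 x).const_mul c)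
  refine h.congr_deriv ?_
  push_cast; ring

private lemma hasDerivAt_cubic (a b c d x : ℝ) :
    HasDerivAt (fun y : ℝ => a + b*y + c*y^2 + d*y^3) (b + 2*c*x + 3*d*x^2) x := by
  have h := (((hasDerivAt_const x a).add ((hasDerivAt_id x).const_mul b)).add
    ((hasDerivAt_pow 2 x).const_mul c)).add ((hasDerivAt_pow 3 x).const_mul d)
  refine h.congr_deriv ?_
  push_cast; ring

private lemma deriv2_eq (C D E : ℝ) (f c₁ c₂ c₃ : ℂ) (g : ℝ → ℝ)
    (hg : g = fun x => Real.exp (C + 2*D*x + E*x^2) *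
      ((f.re + c₁.re*x + c₂.re*x^2 + c₃.re*x^3)^2 +
       (f.im + c₁.im*x + c₂.im*x^2 + c₃.im*x^3)^2)) :
    deriv (deriv g) 0 = Real.exp C *
      ((4*D^2 + 2*E)*(f.re^2 + f.im^2) + 8*D*(f.re*c₁.re + f.im*c₁.im)
        + 2*(c₁.re^2 + c₁.im^2) + 4*(f.re*c₂.re + f.im*c₂.im)) := by
  subst hg
  have h1 : ∀ x : ℝ, HasDerivAt (fun x => Real.exp (C + 2*D*x + E*x^2) *
      ((f.re + c₁.re*x + c₂.re*x^2 + c₃.re*x^3)^2 +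
       (f.im + c₁.im*x + c₂.im*x^2 + c₃.im*x^3)^2))
      (Real.exp (C + 2*D*x + E*x^2) *
        ((2*D + 2*E*x) * ((f.re + c₁.re*x + c₂.re*x^2 + c₃.re*x^3)^2 +
            (f.im + c₁.im*x + c₂.im*x^2 + c₃.im*x^3)^2)
          + 2*(f.re + c₁.re*x + c₂.re*x^2 + c₃.re*x^3)*(c₁.re + 2*c₂.re*x + 3*c₃.re*x^2)
          + 2*(f.im + c₁.im*x + c₂.im*x^2 + c₃.im*x^3)*(c₁.im + 2*c₂.im*x + 3*c₃.im*x^2))) x := by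
    intro x
    have hA := hasDerivAt_cubic f.re c₁.re c₂.re c₃.re x
    have hB := hasDerivAt_cubic f.im c₁.im c₂.im c₃.im x
    have h := (hasDerivAt_quad C (2*D) E x).exp.mul ((hA.pow 2).add (hB.pow 2))
    refine h.congr_deriv ?_
    simp only [Pi.add_apply, Pi.mul_apply, Pi.pow_apply]; push_cast; ring
  have hd1 : deriv (fun x => Real.exp (C + 2*D*x + E*x^2) *
      ((f.re + c₁.re*x + c₂.re*x^2 + c₃.re*x^3)^2 +
       (f.im + c₁.im*x + c₂.im*x^2 + c₃.im*x^3)^2)) = fun x =>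
      Real.exp (C + 2*D*x + E*x^2) *
        ((2*D + 2*E*x) * ((f.re + c₁.re*x + c₂.re*x^2 + c₃.re*x^3)^2 +
            (f.im + c₁.im*x + c₂.im*x^2 + c₃.im*x^3)^2)
          + 2*(f.re + c₁.re*x + c₂.re*x^2 + c₃.re*x^3)*(c₁.re + 2*c₂.re*x + 3*c₃.re*x^2)
          + 2*(f.im + c₁.im*x + c₂.im*x^2 + c₃.im*x^3)*(c₁.im + 2*c₂.im*x + 3*c₃.im*x^2)) :=
    funext fun x => (h1 x).deriv
  rw [hd1]
  have hA := hasDerivAt_cubic f.re c₁.re c₂.re c₃.re 0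
  have hB := hasDerivAt_cubic f.im c₁.im c₂.im c₃.im 0
  have hA' := hasDerivAt_quad c₁.re (2*c₂.re) (3*c₃.re) 0
  have hB' := hasDerivAt_quad c₁.im (2*c₂.im) (3*c₃.im) 0
  have hQ := ((hasDerivAt_lin (2*D) (2*E) 0).mul ((hA.pow 2).add (hB.pow 2))).add
    (((hA.mul hA').const_mul 2).add ((hB.mul hB').const_mul 2))
  have h2 := (hasDerivAt_quad C (2*D) E 0).exp.mul hQ
  have h3 : HasDerivAt (fun x : ℝ =>
      Real.exp (C + 2*D*x + E*x^2) *
        ((2*D + 2*E*x) * ((f.re + c₁.re*x + c₂.re*x^2 + c₃.re*x^3)^2 +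
            (f.im + c₁.im*x + c₂.im*x^2 + c₃.im*x^3)^2)
          + 2*(f.re + c₁.re*x + c₂.re*x^2 + c₃.re*x^3)*(c₁.re + 2*c₂.re*x + 3*c₃.re*x^2)
          + 2*(f.im + c₁.im*x + c₂.im*x^2 + c₃.im*x^3)*(c₁.im + 2*c₂.im*x + 3*c₃.im*x^2)))
      (Real.exp C *
        ((4*D^2 + 2*E)*(f.re^2 + f.im^2) + 8*D*(f.re*c₁.re + f.im*c₁.im)
          + 2*(c₁.re^2 + c₁.im^2) + 4*(f.re*c₂.re + f.im*c₂.im))) 0 := by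
    refine (h2.congr_deriv ?_).congr_of_eventuallyEq (Filter.Eventually.of_forall fun y => ?_)
    · simp only [Pi.add_apply, Pi.mul_apply, Pi.pow_apply]; push_cast; ring
    · simp only [Pi.add_apply, Pi.mul_apply, Pi.pow_apply]; ring
  exact h3.deriv

/-- `q(s,t) = e^{|s|²+|t|²}|s² − t³|²` is strictly plurisubharmonic off the variety
`V = {s² = t³}`: for `s² ≠ t³` and `L ≠ 0`, the function `λ ↦ q((s,t) + λL)` has
strictly positive Laplacian at `λ = 0`. -/
theorem strictly_psh_off_variety (q : ℂ × ℂ → ℝ)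
    (hq : q = fun p : ℂ × ℂ =>
      Real.exp (‖p.1‖ ^ 2 + ‖p.2‖ ^ 2) *
        ‖p.1 ^ 2 - p.2 ^ 3‖ ^ 2) :
    ∀ s t : ℂ, s ^ 2 ≠ t ^ 3 → ∀ L : ℂ × ℂ, L ≠ 0 →
      0 < laplacianAtZero (fun lam : ℂ => q ((s, t) + lam • L)) := by
  intro s t hst L hL
  have hlap : laplacianAtZero (fun lam : ℂ => q ((s, t) + lam • L)) =
      deriv (deriv (fun x : ℝ => q ((s, t) + (x : ℂ) • L))) 0 +
      deriv (deriv (fun x : ℝ => q ((s, t) + ((x : ℂ) * Complex.I) • L))) 0 := rfl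
  rw [hlap]
  have eq1 : (fun x : ℝ => q ((s, t) + (x : ℂ) • L)) = fun x =>
      Real.exp ((Complex.normSq s + Complex.normSq t)
          + 2*((s * (starRingEnd ℂ) L.1 + t * (starRingEnd ℂ) L.2).re)*x
          + (Complex.normSq L.1 + Complex.normSq L.2)*x^2) *
        (((s^2 - t^3).re + (2*s*L.1 - 3*t^2*L.2).re*x + (L.1^2 - 3*t*L.2^2).re*x^2
            + (-L.2^3).re*x^3)^2 +
         ((s^2 - t^3).im + (2*s*L.1 - 3*t^2*L.2).im*x + (L.1^2 - 3*t*L.2^2).im*x^2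
            + (-L.2^3).im*x^3)^2) := by
    funext x
    simp only [hq, Prod.fst_add, Prod.snd_add, Prod.smul_fst, Prod.smul_snd, smul_eq_mul,
      Complex.sq_norm]
    rw [show (s + ↑x*L.1)^2 - (t + ↑x*L.2)^3
        = (s^2 - t^3) + (2*s*L.1 - 3*t^2*L.2)*↑x + (L.1^2 - 3*t*L.2^2)*(↑x*↑x)
          + (-L.2^3)*(↑x*↑x*↑x) by ring]
    congr 1
    · congr 1
      simp only [Complex.normSq_apply, Complex.add_re, Complex.add_im, Complex.mul_re,
        Complex.mul_im, Complex.ofReal_re, Complex.ofReal_im, Complex.conj_re, Complex.conj_im]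
      ring
    · simp only [Complex.normSq_apply, Complex.add_re, Complex.add_im, Complex.mul_re,
        Complex.mul_im, Complex.ofReal_re, Complex.ofReal_im]
      ring
  have eq2 : (fun x : ℝ => q ((s, t) + ((x : ℂ) * Complex.I) • L)) = fun x =>
      Real.exp ((Complex.normSq s + Complex.normSq t)
          + 2*((s * (starRingEnd ℂ) L.1 + t * (starRingEnd ℂ) L.2).im)*x
          + (Complex.normSq L.1 + Complex.normSq L.2)*x^2) *
        (((s^2 - t^3).re + (Complex.I*(2*s*L.1 - 3*t^2*L.2)).re*x
            + (-(L.1^2 - 3*t*L.2^2)).re*x^2 + (-(Complex.I*(-L.2^3))).re*x^3)^2 +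
         ((s^2 - t^3).im + (Complex.I*(2*s*L.1 - 3*t^2*L.2)).im*x
            + (-(L.1^2 - 3*t*L.2^2)).im*x^2 + (-(Complex.I*(-L.2^3))).im*x^3)^2) := by
    funext x
    simp only [hq, Prod.fst_add, Prod.snd_add, Prod.smul_fst, Prod.smul_snd, smul_eq_mul,
      Complex.sq_norm]
    rw [show (s + ↑x*Complex.I*L.1)^2 - (t + ↑x*Complex.I*L.2)^3
        = (s^2 - t^3) + (2*s*L.1 - 3*t^2*L.2)*(↑x*Complex.I)
          + (L.1^2 - 3*t*L.2^2)*((↑x*Complex.I)*(↑x*Complex.I))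
          + (-L.2^3)*((↑x*Complex.I)*(↑x*Complex.I)*(↑x*Complex.I)) by ring]
    congr 1
    · congr 1
      simp only [Complex.normSq_apply, Complex.add_re, Complex.add_im, Complex.mul_re,
        Complex.mul_im, Complex.ofReal_re, Complex.ofReal_im, Complex.conj_re, Complex.conj_im,
        Complex.I_re, Complex.I_im, Complex.neg_re, Complex.neg_im]
      ring
    · simp only [Complex.normSq_apply, Complex.add_re, Complex.add_im, Complex.mul_re,
        Complex.mul_im, Complex.ofReal_re, Complex.ofReal_im,
        Complex.I_re, Complex.I_im, Complex.neg_re, Complex.neg_im]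
      ring
  rw [eq1, eq2,
    deriv2_eq (Complex.normSq s + Complex.normSq t)
      ((s * (starRingEnd ℂ) L.1 + t * (starRingEnd ℂ) L.2).re)
      (Complex.normSq L.1 + Complex.normSq L.2)
      (s^2 - t^3) (2*s*L.1 - 3*t^2*L.2) (L.1^2 - 3*t*L.2^2) (-L.2^3) _ rfl,
    deriv2_eq (Complex.normSq s + Complex.normSq t)
      ((s * (starRingEnd ℂ) L.1 + t * (starRingEnd ℂ) L.2).im)
      (Complex.normSq L.1 + Complex.normSq L.2)
      (s^2 - t^3) (Complex.I*(2*s*L.1 - 3*t^2*L.2)) (-(L.1^2 - 3*t*L.2^2))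
      (-(Complex.I*(-L.2^3))) _ rfl]
  have hE : 0 < Complex.normSq L.1 + Complex.normSq L.2 := by
    have : L.1 ≠ 0 ∨ L.2 ≠ 0 := by
      by_contra h
      push_neg at h
      exact hL (Prod.ext h.1 h.2)
    rcases this with h | h
    · exact add_pos_of_pos_of_nonneg (Complex.normSq_pos.2 h) (Complex.normSq_nonneg _)
    · exact add_pos_of_nonneg_of_pos (Complex.normSq_nonneg _) (Complex.normSq_pos.2 h)
  have hf : 0 < Complex.normSq (s^2 - t^3) :=
    Complex.normSq_pos.2 (sub_ne_zero.mpr hst)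
  have hkey : ∀ B₁ B₂ : ℝ,
      Real.exp (Complex.normSq s + Complex.normSq t) * B₁ +
      Real.exp (Complex.normSq s + Complex.normSq t) * B₂ =
      Real.exp (Complex.normSq s + Complex.normSq t) * (B₁ + B₂) := fun B₁ B₂ =>
    (mul_add _ _ _).symm
  rw [hkey]
  have hident :
      ((4*((s * (starRingEnd ℂ) L.1 + t * (starRingEnd ℂ) L.2).re)^2
          + 2*(Complex.normSq L.1 + Complex.normSq L.2))*((s^2-t^3).re^2 + (s^2-t^3).im^2)
        + 8*((s * (starRingEnd ℂ) L.1 + t * (starRingEnd ℂ) L.2).re)*((s^2-t^3).re*(2*s*L.1 - 3*t^2*L.2).re + (s^2-t^3).im*(2*s*L.1 - 3*t^2*L.2).im)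
        + 2*((2*s*L.1 - 3*t^2*L.2).re^2 + (2*s*L.1 - 3*t^2*L.2).im^2)
        + 4*((s^2-t^3).re*(L.1^2 - 3*t*L.2^2).re + (s^2-t^3).im*(L.1^2 - 3*t*L.2^2).im))
      + ((4*((s * (starRingEnd ℂ) L.1 + t * (starRingEnd ℂ) L.2).im)^2
          + 2*(Complex.normSq L.1 + Complex.normSq L.2))*((s^2-t^3).re^2 + (s^2-t^3).im^2)
        + 8*((s * (starRingEnd ℂ) L.1 + t * (starRingEnd ℂ) L.2).im)*((s^2-t^3).re*(Complex.I*(2*s*L.1 - 3*t^2*L.2)).re + (s^2-t^3).im*(Complex.I*(2*s*L.1 - 3*t^2*L.2)).im)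
        + 2*((Complex.I*(2*s*L.1 - 3*t^2*L.2)).re^2 + (Complex.I*(2*s*L.1 - 3*t^2*L.2)).im^2)
        + 4*((s^2-t^3).re*(-(L.1^2 - 3*t*L.2^2)).re + (s^2-t^3).im*(-(L.1^2 - 3*t*L.2^2)).im))
      = 4*((Complex.normSq L.1 + Complex.normSq L.2) * Complex.normSq (s^2 - t^3)
          + Complex.normSq ((starRingEnd ℂ) (s * (starRingEnd ℂ) L.1 + t * (starRingEnd ℂ) L.2)
              * (s^2 - t^3) + (2*s*L.1 - 3*t^2*L.2))) := by
    simp only [Complex.normSq_apply, Complex.mul_re, Complex.mul_im, Complex.add_re,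
      Complex.add_im, Complex.neg_re, Complex.neg_im, Complex.I_re, Complex.I_im,
      Complex.conj_re, Complex.conj_im]
    ring
  rw [hident]
  have h4 : 0 < 4*((Complex.normSq L.1 + Complex.normSq L.2) * Complex.normSq (s^2 - t^3)
      + Complex.normSq ((starRingEnd ℂ) (s * (starRingEnd ℂ) L.1 + t * (starRingEnd ℂ) L.2)
          * (s^2 - t^3) + (2*s*L.1 - 3*t^2*L.2))) := by
    nlinarith [Complex.normSq_nonneg ((starRingEnd ℂ) (s * (starRingEnd ℂ) L.1 + t * (starRingEnd ℂ) L.2) * (s^2 - t^3) + (2*s*L.1 - 3*t^2*L.2)), mul_pos hE hf]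
  exact mul_pos (Real.exp_pos _) h4
end
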